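/- Each polynomial factor f_m(z) = 1 + 2z + 2z^2 + ... + 2z^m (m ≥ 1) has a log-concave coefficient sequence, and hence the product ∏_{m=1}^{n-1} f_m(z) has a log-concave (and therefore unimodal) coefficient sequence. -/

import Mathlib

open Polynomial Finset

/-- Log-concave coefficients with no internal zeros. -/
def LCpoly (p : Polynomial ℕ) : Prop :=
  (∀ k, p.coeff k * p.coeff (k + 2) ≤ p.coeff (k + 1) ^ 2) ∧
  ∀ i ≤ p.natDegree, 0 < p.coeff i

lemma lc_one : LCpoly 1 := by
  constructor
  · intro k; simp [Polynomial.coeff_one]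
  · intro i hi; simp at hi; simp [hi]

lemma lc_tp2 (p : Polynomial ℕ) (hp : LCpoly p) :
    ∀ d i, p.coeff i * p.coeff (i + d + 1) ≤ p.coeff (i + 1) * p.coeff (i + d) := by
  intro d
  induction d with
  | zero => intro i; simpa using (mul_comm (p.coeff i) (p.coeff (i+1))).le
  | succ d ih =>
    intro i
    by_cases h1 : p.coeff (i + 1) = 0
    · have hd : p.natDegree < i + 1 := by
        by_contra h
        exact absurd (hp.2 (i+1) (by omega)) (by simp [h1])
      have : p.coeff (i + (d+1) + 1) = 0 :=
        Polynomial.coeff_eq_zero_of_natDegree_lt (by omega)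
      simp [this]
    · have pos : 0 < p.coeff (i + 1) := Nat.pos_of_ne_zero h1
      have IH := ih (i + 1)
      have LCi := hp.1 i
      have key : p.coeff (i+1) * (p.coeff i * p.coeff (i + (d+1) + 1)) ≤
          p.coeff (i+1) * (p.coeff (i + 1) * p.coeff (i + (d+1))) := by
        have e1 : i + 1 + d + 1 = i + (d+1) + 1 := by omega
        have e2 : i + 1 + d = i + (d+1) := by omega
        rw [e1, e2] at IH
        nlinarith [IH, LCi, Nat.zero_le (p.coeff i), Nat.zero_le (p.coeff (i + (d+1)))]
      exact Nat.le_of_mul_le_mul_left key pos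

lemma lc_tp2' (p : Polynomial ℕ) (hp : LCpoly p) {i j : ℕ} (hij : i ≤ j) :
    p.coeff i * p.coeff (j + 1) ≤ p.coeff (i + 1) * p.coeff j := by
  have := lc_tp2 p hp (j - i) i
  rwa [show i + (j - i) + 1 = j + 1 by omega, show i + (j - i) = j by omega] at this

/-- A 2×2 Cauchy–Binet style inequality. -/
lemma key_ineq (S : Finset ℕ) (f g F G : ℕ → ℤ)
    (h : ∀ s ∈ S, ∀ t ∈ S, s ≤ t → f t * g s ≤ f s * g t ∧ F t * G s ≤ F s * G t) :
    (∑ s ∈ S, f s * G s) * (∑ s ∈ S, g s * F s) ≤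
      (∑ s ∈ S, f s * F s) * (∑ s ∈ S, g s * G s) := by
  have H : 0 ≤ ∑ s ∈ S, ∑ t ∈ S, (f s * g t - f t * g s) * (F s * G t - F t * G s) := by
    refine Finset.sum_nonneg fun s hs => Finset.sum_nonneg fun t ht => ?_
    rcases le_total s t with hle | hle
    · obtain ⟨h1, h2⟩ := h s hs t ht hle
      exact mul_nonneg (by linarith) (by linarith)
    · obtain ⟨h1, h2⟩ := h t ht s hs hle
      have e : (f s * g t - f t * g s) * (F s * G t - F t * G s)
          = (f t * g s - f s * g t) * (F t * G s - F s * G t) := by ring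
      rw [e]; exact mul_nonneg (by linarith) (by linarith)
  have e : ∀ s ∈ S, ∑ t ∈ S, (f s * g t - f t * g s) * (F s * G t - F t * G s)
      = f s * F s * (∑ t ∈ S, g t * G t) - f s * G s * (∑ t ∈ S, g t * F t)
        - g s * F s * (∑ t ∈ S, f t * G t) + g s * G s * (∑ t ∈ S, f t * F t) := by
    intro s _
    rw [Finset.mul_sum, Finset.mul_sum, Finset.mul_sum, Finset.mul_sum,
      ← Finset.sum_sub_distrib, ← Finset.sum_sub_distrib, ← Finset.sum_add_distrib]
    exact Finset.sum_congr rfl fun t _ => by ring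
  rw [Finset.sum_congr rfl e, Finset.sum_add_distrib, Finset.sum_sub_distrib,
    Finset.sum_sub_distrib, ← Finset.sum_mul, ← Finset.sum_mul, ← Finset.sum_mul,
    ← Finset.sum_mul] at H
  nlinarith [H]

/-- Product of log-concave polynomials (no internal zeros) is log-concave. -/
lemma lc_mul (p q : Polynomial ℕ) (hp : LCpoly p) (hq : LCpoly q) : LCpoly (p * q) := by
  have hp0 : p ≠ 0 := fun h => by
    have := hp.2 0 (Nat.zero_le _); simp [h] at this
  have hq0 : q ≠ 0 := fun h => by
    have := hq.2 0 (Nat.zero_le _); simp [h] at this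
  constructor
  · -- log-concavity
    intro k
    set a : ℕ → ℤ := fun i => (p.coeff i : ℤ) with ha
    set b : ℕ → ℤ := fun i => (q.coeff i : ℤ) with hb
    have anneg : ∀ i, 0 ≤ a i := fun i => Int.natCast_nonneg _
    have bnneg : ∀ i, 0 ≤ b i := fun i => Int.natCast_nonneg _
    have cc : ∀ n : ℕ, (((p * q).coeff n : ℤ)) = ∑ i ∈ Finset.range (n + 1), a i * b (n - i) := by
      intro n
      rw [Polynomial.coeff_mul, Finset.Nat.sum_antidiagonal_eq_sum_range_succ_mk]
      push_cast
      rfl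
    set f : ℕ → ℤ := fun s => a s with hf
    set g : ℕ → ℤ := fun s => if s = 0 then 0 else a (s - 1) with hg
    set F : ℕ → ℤ := fun s => if s ≤ k + 1 then b (k + 1 - s) else 0 with hF
    set G : ℕ → ℤ := fun s => if s ≤ k + 2 then b (k + 2 - s) else 0 with hG
    have gnneg : ∀ s, 0 ≤ g s := fun s => by
      simp only [hg]; split <;> [rfl; exact anneg _]
    have Fnneg : ∀ s, 0 ≤ F s := fun s => by
      simp only [hF]; split <;> [exact bnneg _; rfl]
    have Gnneg : ∀ s, 0 ≤ G s := fun s => by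
      simp only [hG]; split <;> [exact bnneg _; rfl]
    have hkey := key_ineq (Finset.range (k + 3)) f g F G ?_
    · have S1 : ∑ s ∈ Finset.range (k + 3), f s * F s = ((p * q).coeff (k + 1) : ℤ) := by
        rw [Finset.sum_range_succ, cc (k + 1)]
        have : F (k + 2) = 0 := by simp [hF]
        rw [this, mul_zero, add_zero]
        refine Finset.sum_congr rfl fun s hs => ?_
        simp only [Finset.mem_range] at hs
        simp only [hf, hF, if_pos (by omega : s ≤ k + 1)]
      have S2 : ∑ s ∈ Finset.range (k + 3), g s * G s = ((p * q).coeff (k + 1) : ℤ) := by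
        rw [Finset.sum_range_succ', cc (k + 1)]
        have h0 : g 0 = 0 := by simp [hg]
        rw [h0, zero_mul, add_zero]
        refine Finset.sum_congr rfl fun s hs => ?_
        simp only [Finset.mem_range] at hs
        simp only [hg, hG, if_neg (Nat.succ_ne_zero s), if_pos (by omega : s + 1 ≤ k + 2),
          Nat.add_sub_cancel]
        congr 2
        omega
      have S3 : ∑ s ∈ Finset.range (k + 3), f s * G s = ((p * q).coeff (k + 2) : ℤ) := by
        rw [cc (k + 2)]
        refine Finset.sum_congr rfl fun s hs => ?_
        simp only [Finset.mem_range] at hs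
        simp only [hf, hG, if_pos (by omega : s ≤ k + 2)]
      have S4 : ∑ s ∈ Finset.range (k + 3), g s * F s = ((p * q).coeff k : ℤ) := by
        rw [Finset.sum_range_succ', cc k]
        have h0 : g 0 = 0 := by simp [hg]
        rw [h0, zero_mul, add_zero, Finset.sum_range_succ]
        have hF2 : F (k + 2) = 0 := by simp [hF]
        rw [hF2, mul_zero, add_zero]
        refine Finset.sum_congr rfl fun s hs => ?_
        simp only [Finset.mem_range] at hs
        simp only [hg, hF, if_neg (Nat.succ_ne_zero s), if_pos (by omega : s + 1 ≤ k + 1),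
          Nat.add_sub_cancel]
        congr 2
        omega
      rw [S1, S2, S3, S4] at hkey
      have goalZ : ((p * q).coeff k : ℤ) * ((p * q).coeff (k + 2) : ℤ)
          ≤ ((p * q).coeff (k + 1) : ℤ) ^ 2 := by nlinarith [hkey]
      exact_mod_cast goalZ
    · intro s hs t ht hst
      constructor
      · -- f t * g s ≤ f s * g t
        rcases Nat.eq_zero_or_pos s with rfl | hs0
        · simp only [hg, if_pos rfl, mul_zero]
          exact mul_nonneg (anneg _) (gnneg _)
        · have ht0 : 0 < t := lt_of_lt_of_le hs0 hst
          simp only [hf, hg, if_neg (Nat.pos_iff_ne_zero.mp hs0),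
            if_neg (Nat.pos_iff_ne_zero.mp ht0)]
          have h2 := lc_tp2' p hp (show s - 1 ≤ t - 1 by omega)
          have e1 : (s - 1) + 1 = s := by omega
          have e2 : (t - 1) + 1 = t := by omega
          rw [e1, e2] at h2
          have : (p.coeff (s-1) : ℤ) * (p.coeff t : ℤ) ≤ (p.coeff s : ℤ) * (p.coeff (t-1) : ℤ) := by
            exact_mod_cast h2
          nlinarith [this]
      · -- F t * G s ≤ F s * G t
        by_cases htk : t ≤ k + 1
        · have hsk : s ≤ k + 1 := le_trans hst htk
          simp only [hF, hG, if_pos htk, if_pos hsk, if_pos (by omega : s ≤ k + 2),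
            if_pos (by omega : t ≤ k + 2)]
          have h2 := lc_tp2' q hq (show k + 1 - t ≤ k + 1 - s by omega)
          have e1 : (k + 1 - s) + 1 = k + 2 - s := by omega
          have e2 : (k + 1 - t) + 1 = k + 2 - t := by omega
          rw [e1, e2] at h2
          have : (q.coeff (k+1-t) : ℤ) * (q.coeff (k+2-s) : ℤ)
              ≤ (q.coeff (k+2-t) : ℤ) * (q.coeff (k+1-s) : ℤ) := by exact_mod_cast h2
          nlinarith [this]
        · simp only [hF, if_neg htk, zero_mul]
          exact mul_nonneg (Fnneg _) (Gnneg _)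
  · -- positivity
    intro i hi
    rw [Polynomial.natDegree_mul hp0 hq0] at hi
    rw [Polynomial.coeff_mul]
    refine Finset.sum_pos' (fun _ _ => Nat.zero_le _)
      ⟨(min i p.natDegree, i - min i p.natDegree), ?_, ?_⟩
    · exact Finset.HasAntidiagonal.mem_antidiagonal.mpr (show min i p.natDegree + (i - min i p.natDegree) = i by omega)
    · exact Nat.mul_pos (hp.2 _ (min_le_right _ _)) (hq.2 _ (by omega))

lemma lc_prod (s : Finset ℕ) (f : ℕ → Polynomial ℕ) (h : ∀ m ∈ s, LCpoly (f m)) :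
    LCpoly (∏ m ∈ s, f m) := by
  induction s using Finset.cons_induction with
  | empty => simpa using lc_one
  | cons a s ha ih =>
    rw [Finset.prod_cons]
    exact lc_mul _ _ (h a (Finset.mem_cons_self a s))
      (ih fun m hm => h m (Finset.mem_cons_of_mem hm))

/-- The factor `f_m(z) = 1 + 2z + 2z² + ⋯ + 2zᵐ`. -/
noncomputable def factorPoly (m : ℕ) : Polynomial ℕ :=
  1 + 2 * ∑ j ∈ Finset.Icc 1 m, Polynomial.X ^ j

lemma factor_coeff (m k : ℕ) :
    (factorPoly m).coeff k = if k = 0 then 1 else if k ≤ m then 2 else 0 := by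
  unfold factorPoly
  rw [Polynomial.coeff_add, Polynomial.coeff_ofNat_mul, Polynomial.finset_sum_coeff]
  simp only [Polynomial.coeff_X_pow, Polynomial.coeff_one]
  rw [Finset.sum_ite_eq (Finset.Icc 1 m) k (fun _ => (1:ℕ))]
  simp only [Finset.mem_Icc]
  split_ifs <;> omega

lemma factor_natDegree {m : ℕ} (hm : 1 ≤ m) : (factorPoly m).natDegree = m := by
  apply le_antisymm
  · rw [Polynomial.natDegree_le_iff_coeff_eq_zero]
    intro N hN
    rw [factor_coeff]
    split_ifs <;> omega
  · apply Polynomial.le_natDegree_of_ne_zero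
    rw [factor_coeff]
    split_ifs <;> omega

lemma lc_factor {m : ℕ} (hm : 1 ≤ m) : LCpoly (factorPoly m) := by
  constructor
  · intro k
    simp only [factor_coeff]
    split_ifs <;> simp_all <;> omega
  · intro i hi
    rw [factor_natDegree hm] at hi
    rw [factor_coeff]
    split_ifs <;> omega

theorem factorPoly_log_concave_and_prod :
    (∀ m : ℕ, 1 ≤ m → ∀ k : ℕ, 1 ≤ k →
      (factorPoly m).coeff (k - 1) * (factorPoly m).coeff (k + 1) ≤
        (factorPoly m).coeff k ^ 2) ∧
    ∀ n : ℕ, ∀ k : ℕ, 1 ≤ k →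
      (∏ m ∈ Finset.Icc 1 (n - 1), factorPoly m).coeff (k - 1) *
          (∏ m ∈ Finset.Icc 1 (n - 1), factorPoly m).coeff (k + 1) ≤
        (∏ m ∈ Finset.Icc 1 (n - 1), factorPoly m).coeff k ^ 2 := by
  constructor
  · intro m hm k hk
    obtain ⟨j, rfl⟩ : ∃ j, k = j + 1 := ⟨k - 1, by omega⟩
    simpa [Nat.add_sub_cancel] using (lc_factor hm).1 j
  · intro n k hk
    have h := lc_prod (Finset.Icc 1 (n - 1)) factorPoly
      (fun m hm => lc_factor (Finset.mem_Icc.mp hm).1)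
    obtain ⟨j, rfl⟩ : ∃ j, k = j + 1 := ⟨k - 1, by omega⟩
    simpa [Nat.add_sub_cancel] using h.1 j
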